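/- arXiv:2205.03308 — 3 statements merged into one kernel-verified Lean document; each statement's English description precedes it below -/
import Mathlib

section
/- The independence number of the OR product of two finite simple graphs equals the product of their independence numbers: α(G × H) = α(G) · α(H). -/
/-- The OR (disjunctive / co-normal) product of two simple graphs. -/
def SimpleGraph.orProd {V W : Type*} (G : SimpleGraph V) (H : SimpleGraph W) :
    SimpleGraph (V × W) where
  Adj p q := G.Adj p.1 q.1 ∨ H.Adj p.2 q.2
  symm := ⟨fun _ _ h => h.imp (fun h' => h'.symm) (fun h' => h'.symm)⟩
  loopless := ⟨fun p h => h.elim (G.loopless.irrefl p.1) (H.loopless.irrefl p.2)⟩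

/-- A finset of vertices is independent: no two of its members are adjacent. -/
def SimpleGraph.IsIndepFinset {V : Type*} (G : SimpleGraph V) (s : Finset V) : Prop :=
  ∀ u ∈ s, ∀ v ∈ s, ¬ G.Adj u v

/-- The independence number: the maximum cardinality of an independent set. -/
noncomputable def SimpleGraph.indepNumFin {V : Type*} (G : SimpleGraph V) : ℕ :=
  sSup {k : ℕ | ∃ s : Finset V, G.IsIndepFinset s ∧ s.card = k}

lemma indepSet_bddAbove {V : Type*} [Fintype V] (G : SimpleGraph V) :
    BddAbove {k : ℕ | ∃ s : Finset V, G.IsIndepFinset s ∧ s.card = k} := by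
  refine ⟨Fintype.card V, fun k hk => ?_⟩
  obtain ⟨s, _, rfl⟩ := hk
  exact s.card_le_univ

lemma indepSet_nonempty {V : Type*} (G : SimpleGraph V) :
    {k : ℕ | ∃ s : Finset V, G.IsIndepFinset s ∧ s.card = k}.Nonempty :=
  ⟨0, ∅, fun u hu => absurd hu (Finset.notMem_empty u), Finset.card_empty⟩

lemma card_le_indepNum {V : Type*} [Fintype V] (G : SimpleGraph V) {s : Finset V}
    (hs : G.IsIndepFinset s) : s.card ≤ G.indepNumFin :=
  le_csSup (indepSet_bddAbove G) ⟨s, hs, rfl⟩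

lemma exists_indep_card_eq {V : Type*} [Fintype V] (G : SimpleGraph V) :
    ∃ s : Finset V, G.IsIndepFinset s ∧ s.card = G.indepNumFin :=
  Nat.sSup_mem (indepSet_nonempty G) (indepSet_bddAbove G)

/-- The independence number of the OR product of two finite simple graphs equals the
product of their independence numbers: `α(G × H) = α(G) · α(H)`. -/
theorem indepNum_orProd {V W : Type*} [Fintype V] [Fintype W]
    (G : SimpleGraph V) (H : SimpleGraph W) :
    (G.orProd H).indepNumFin = G.indepNumFin * H.indepNumFin := by
  classical
  apply le_antisymm
  · apply csSup_le (indepSet_nonempty _)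
    rintro k ⟨s, hs, rfl⟩
    have h1 : G.IsIndepFinset (s.image Prod.fst) := by
      intro u hu v hv hadj
      obtain ⟨p, hp, rfl⟩ := Finset.mem_image.1 hu
      obtain ⟨q, hq, rfl⟩ := Finset.mem_image.1 hv
      exact hs p hp q hq (Or.inl hadj)
    have h2 : H.IsIndepFinset (s.image Prod.snd) := by
      intro u hu v hv hadj
      obtain ⟨p, hp, rfl⟩ := Finset.mem_image.1 hu
      obtain ⟨q, hq, rfl⟩ := Finset.mem_image.1 hv
      exact hs p hp q hq (Or.inr hadj)
    calc s.card ≤ ((s.image Prod.fst) ×ˢ (s.image Prod.snd)).card := by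
          apply Finset.card_le_card
          intro p hp
          exact Finset.mem_product.2 ⟨Finset.mem_image_of_mem _ hp,
            Finset.mem_image_of_mem _ hp⟩
      _ = (s.image Prod.fst).card * (s.image Prod.snd).card := Finset.card_product _ _
      _ ≤ G.indepNumFin * H.indepNumFin :=
          Nat.mul_le_mul (card_le_indepNum G h1) (card_le_indepNum H h2)
  · obtain ⟨sG, hG, hcG⟩ := exists_indep_card_eq G
    obtain ⟨sH, hH, hcH⟩ := exists_indep_card_eq H
    have : (G.orProd H).IsIndepFinset (sG ×ˢ sH) := by
      rintro ⟨u, w⟩ hu ⟨v, x⟩ hv hadj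
      obtain ⟨hu1, hu2⟩ := Finset.mem_product.1 hu
      obtain ⟨hv1, hv2⟩ := Finset.mem_product.1 hv
      rcases hadj with h | h
      · exact hG u hu1 v hv1 h
      · exact hH w hu2 x hv2 h
    calc G.indepNumFin * H.indepNumFin = (sG ×ˢ sH).card := by
          rw [Finset.card_product, hcG, hcH]
      _ ≤ (G.orProd H).indepNumFin := card_le_indepNum _ this
end

section
/- The fractional chromatic number is multiplicative under the OR product: χ_f(G × H) = χ_f(G) · χ_f(H) for all finite simple graphs G, H. In particular, χ_f(G^m) = (χ_f(G))^m for the m-fold OR product G^m. -/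
/-- The `m`-fold OR product of a simple graph with itself: vertices are `m`-tuples
and two tuples are adjacent iff they are adjacent in some coordinate. -/
def SimpleGraph.orPow {V : Type*} (G : SimpleGraph V) (m : ℕ) :
    SimpleGraph (Fin m → V) where
  Adj f g := ∃ k, G.Adj (f k) (g k)
  symm := ⟨fun _ _ h => h.imp (fun _ h' => h'.symm)⟩
  loopless := ⟨fun f h => by obtain ⟨k, hk⟩ := h; exact G.loopless.irrefl (f k) hk⟩

/-- A `b`-fold proper coloring of `G` using `a` colors. -/
def SimpleGraph.IsFoldColoring {V : Type*} (G : SimpleGraph V) (a b : ℕ) : Prop :=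
  ∃ c : V → Finset (Fin a), (∀ v, (c v).card = b) ∧
    ∀ u v, G.Adj u v → Disjoint (c u) (c v)

/-- The fractional chromatic number of `G`. -/
noncomputable def SimpleGraph.fracChromaticNumber {V : Type*} (G : SimpleGraph V) : ℝ :=
  sInf {r : ℝ | ∃ a b : ℕ, 0 < b ∧ G.IsFoldColoring a b ∧ r = (a : ℝ) / b}

set_option linter.unusedSectionVars false

open Finset

private lemma le_of_forall_pos_le_add'' {a b : ℝ} (h : ∀ ε : ℝ, 0 < ε → a ≤ b + ε) : a ≤ b := by
  by_contra hc
  push_neg at hc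
  have := h ((a - b) / 2) (by linarith)
  linarith

namespace FracChromAux

variable {V : Type*} [Fintype V] (G : SimpleGraph V)

/-- Independent finsets. -/
def Indep (S : Finset V) : Prop := ∀ u ∈ S, ∀ v ∈ S, ¬ G.Adj u v

/-- Fractional cliques. -/
def FracClique (w : V → ℝ) : Prop :=
  (∀ v, 0 ≤ w v) ∧ ∀ S : Finset V, Indep G S → ∑ v ∈ S, w v ≤ 1

def colorSet : Set ℝ :=
  {r : ℝ | ∃ a b : ℕ, 0 < b ∧ G.IsFoldColoring a b ∧ r = (a : ℝ) / b}

lemma fcn_eq : G.fracChromaticNumber = sInf (colorSet G) := rfl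

lemma colorSet_nonneg : ∀ r ∈ colorSet G, (0:ℝ) ≤ r := by
  rintro r ⟨a, b, hb, _, rfl⟩
  positivity

lemma colorSet_bddBelow : BddBelow (colorSet G) := ⟨0, colorSet_nonneg G⟩

lemma colorSet_nonempty : (colorSet G).Nonempty := by
  classical
  refine ⟨(Fintype.card V : ℝ) / 1, Fintype.card V, 1, one_pos, ?_, by norm_num⟩
  refine ⟨fun v => {Fintype.equivFin V v}, fun v => rfl, fun u v huv => ?_⟩
  rw [Finset.disjoint_singleton]
  exact fun h => G.ne_of_adj huv ((Fintype.equivFin V).injective h)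

lemma fcn_nonneg : 0 ≤ G.fracChromaticNumber :=
  le_csInf (colorSet_nonempty G) (colorSet_nonneg G)

/-- Weak LP duality. -/
lemma weak_duality {w : V → ℝ} (hw : FracClique G w) {a b : ℕ} (hb : 0 < b)
    (hc : G.IsFoldColoring a b) : ∑ v, w v ≤ (a : ℝ) / b := by
  classical
  obtain ⟨c, hcard, hdisj⟩ := hc
  rw [le_div_iff₀ (by exact_mod_cast hb)]
  have key : (∑ v, w v) * b = ∑ i : Fin a, ∑ v ∈ univ.filter (fun v => i ∈ c v), w v := by
    have h1 : ∀ v : V, w v * b = ∑ i : Fin a, if i ∈ c v then w v else 0 := by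
      intro v
      rw [Finset.sum_ite_mem, univ_inter, Finset.sum_const, ← hcard v]
      simp [mul_comm]
    rw [Finset.sum_mul]
    calc ∑ v, w v * b = ∑ v, ∑ i : Fin a, if i ∈ c v then w v else 0 :=
          Finset.sum_congr rfl fun v _ => h1 v
      _ = ∑ i : Fin a, ∑ v, if i ∈ c v then w v else 0 := Finset.sum_comm
      _ = ∑ i : Fin a, ∑ v ∈ univ.filter (fun v => i ∈ c v), w v := by
          refine Finset.sum_congr rfl fun i _ => ?_
          rw [Finset.sum_filter]
  rw [key]
  calc ∑ i : Fin a, ∑ v ∈ univ.filter (fun v => i ∈ c v), w v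
      ≤ ∑ _i : Fin a, (1:ℝ) := by
        refine Finset.sum_le_sum fun i _ => hw.2 _ ?_
        intro u hu v hv hadj
        simp only [mem_filter] at hu hv
        exact Finset.disjoint_left.1 (hdisj u v hadj) hu.2 hv.2
    _ = a := by simp


/-- From a real fractional coloring we get `χ_f ≤` its value, by rational approximation. -/
lemma fcn_le_of_realColoring [DecidableEq V] (x : Finset V → ℝ)
    (h0 : ∀ I, 0 ≤ x I) (hsupp : ∀ I, ¬ Indep G I → x I = 0)
    (hcov : ∀ v : V, 1 ≤ ∑ I ∈ univ.filter (fun I : Finset V => v ∈ I), x I) :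
    G.fracChromaticNumber ≤ ∑ I : Finset V, x I := by
  set C : ℝ := (Fintype.card (Finset V) : ℝ) with hC
  have hC0 : 0 < C := by
    have h : 0 < Fintype.card (Finset V) := Fintype.card_pos
    rw [hC]
    exact_mod_cast h
  refine le_of_forall_pos_le_add'' fun ε hε => ?_
  obtain ⟨n, hn⟩ := exists_nat_gt (C / ε)
  have hn0 : 0 < n := by
    have : (0:ℝ) < C / ε := div_pos hC0 hε
    exact_mod_cast this.trans hn
  have hnR : (0:ℝ) < n := by exact_mod_cast hn0
  -- integer approximation of coefficients
  set m : Finset V → ℕ := fun I => ⌈x I * n⌉₊ with hm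
  set a : ℕ := ∑ I : Finset V, m I with ha
  -- the sigma type of colors
  have hcardsig : Fintype.card ((I : Finset V) × Fin (m I)) = a := by
    simp [ha, Fintype.card_sigma]
  set e : ((I : Finset V) × Fin (m I)) ≃ Fin a := Fintype.equivFinOfCardEq hcardsig with he
  -- for each vertex, the set of colors available to it
  set A : V → Finset ((I : Finset V) × Fin (m I)) :=
    fun v => univ.filter (fun p => v ∈ p.1) with hA
  have hAcard : ∀ v, (A v).card = ∑ I ∈ univ.filter (fun I : Finset V => v ∈ I), m I := by
    intro v
    have : A v = (univ.filter (fun I : Finset V => v ∈ I)).sigma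
        (fun I => (univ : Finset (Fin (m I)))) := by
      ext p
      simp [hA, Finset.mem_sigma]
    rw [this, Finset.card_sigma]
    simp
  have hAn : ∀ v, n ≤ (A v).card := by
    intro v
    have hreal : (n:ℝ) ≤ ∑ I ∈ univ.filter (fun I : Finset V => v ∈ I), (m I : ℝ) := by
      calc (n:ℝ) = n * 1 := by ring
        _ ≤ n * ∑ I ∈ univ.filter (fun I : Finset V => v ∈ I), x I := by
            exact mul_le_mul_of_nonneg_left (hcov v) hnR.le
        _ = ∑ I ∈ univ.filter (fun I : Finset V => v ∈ I), x I * n := by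
            rw [Finset.mul_sum]; exact Finset.sum_congr rfl fun I _ => by ring
        _ ≤ ∑ I ∈ univ.filter (fun I : Finset V => v ∈ I), (m I : ℝ) :=
            Finset.sum_le_sum fun I _ => Nat.le_ceil _
    rw [hAcard v]
    exact_mod_cast hreal
  -- choose the coloring
  have hchoose : ∀ v : V, ∃ t ⊆ A v, t.card = n := fun v =>
    Finset.exists_subset_card_eq (hAn v)
  choose t ht htcard using hchoose
  have hcoloring : G.IsFoldColoring a n := by
    refine ⟨fun v => (t v).image e, fun v => ?_, fun u v hadj => ?_⟩
    · rw [Finset.card_image_of_injective _ e.injective, htcard]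
    · rw [Finset.disjoint_left]
      rintro i hi hj
      obtain ⟨p, hp, hpe⟩ := Finset.mem_image.1 hi
      obtain ⟨q, hq, hqe⟩ := Finset.mem_image.1 hj
      have hpq : p = q := e.injective (hpe.trans hqe.symm)
      subst hpq
      have hu : u ∈ p.1 := by have := ht u hp; simpa [hA] using this
      have hv : v ∈ p.1 := by have := ht v hq; simpa [hA] using this
      have hxpos : x p.1 ≠ 0 := by
        intro hz
        have hm0 : m p.1 = 0 := by simp [hm, hz]
        have h2 := p.2.2
        omega
      have hindep : Indep G p.1 := by
        by_contra hni
        exact hxpos (hsupp _ hni)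
      exact hindep u hu v hv hadj
  have hmem : (a : ℝ) / n ∈ colorSet G := ⟨a, n, hn0, hcoloring, rfl⟩
  have hbound : (a : ℝ) / n ≤ (∑ I : Finset V, x I) + ε := by
    have haR : (a : ℝ) ≤ n * (∑ I : Finset V, x I) + C := by
      have : (a : ℝ) = ∑ I : Finset V, (m I : ℝ) := by push_cast [ha]; rfl
      rw [this, Finset.mul_sum, hC]
      have : (Fintype.card (Finset V) : ℝ) = ∑ _I : Finset V, (1:ℝ) := by simp
      rw [this, ← Finset.sum_add_distrib]
      refine Finset.sum_le_sum fun I _ => ?_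
      have := Nat.ceil_lt_add_one (mul_nonneg (h0 I) hnR.le)
      calc (m I : ℝ) = (⌈x I * n⌉₊ : ℝ) := by rw [hm]
        _ ≤ x I * n + 1 := by linarith
        _ = n * x I + 1 := by ring
    rw [div_le_iff₀ hnR]
    have hCn : C ≤ ε * n := by
      rw [div_lt_iff₀ hε] at hn
      linarith [hn]
    calc (a:ℝ) ≤ n * (∑ I : Finset V, x I) + C := haR
      _ ≤ n * (∑ I : Finset V, x I) + ε * n := by linarith
      _ = ((∑ I : Finset V, x I) + ε) * n := by ring
  exact (csInf_le (colorSet_bddBelow G) hmem).trans hbound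

/-- Strong LP duality: fractional cliques with weight approaching `χ_f`. -/
lemma exists_fracClique {t : ℝ} (ht0 : 0 ≤ t) (ht : t < G.fracChromaticNumber) :
    ∃ w : V → ℝ, FracClique G w ∧ t ≤ ∑ v, w v := by
  classical
  -- the linear map sending coefficient vectors to vertex coverage
  set L : (Finset V → ℝ) →ₗ[ℝ] (V → ℝ) :=
    { toFun := fun x v => ∑ I ∈ univ.filter (fun I : Finset V => v ∈ I), x I
      map_add' := by
        intro x y; funext v; exact Finset.sum_add_distrib
      map_smul' := by
        intro r x; funext v; simp [Finset.mul_sum] } with hL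
  set Δ : Set (Finset V → ℝ) :=
    {x | (∀ I, 0 ≤ x I) ∧ (∀ I, ¬ Indep G I → x I = 0) ∧ ∑ I : Finset V, x I ≤ t} with hΔ
  have hΔconv : Convex ℝ Δ := by
    rintro x ⟨hx0, hxs, hxt⟩ y ⟨hy0, hys, hyt⟩ α β hα hβ hαβ
    refine ⟨fun I => add_nonneg (mul_nonneg hα (hx0 I)) (mul_nonneg hβ (hy0 I)),
      fun I hI => by simp [hxs I hI, hys I hI], ?_⟩
    have : ∑ I : Finset V, (α * x I + β * y I) =
        α * (∑ I : Finset V, x I) + β * (∑ I : Finset V, y I) := by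
      rw [Finset.sum_add_distrib, Finset.mul_sum, Finset.mul_sum]
    calc ∑ I : Finset V, (α • x + β • y) I
        = α * (∑ I : Finset V, x I) + β * (∑ I : Finset V, y I) := by
          simpa [smul_eq_mul] using this
      _ ≤ α * t + β * t := by
          gcongr <;> assumption
      _ = t := by rw [← add_mul, hαβ, one_mul]
  have hΔclosed : IsClosed Δ := by
    have h1 : IsClosed {x : Finset V → ℝ | ∀ I, 0 ≤ x I} := by
      have : {x : Finset V → ℝ | ∀ I, 0 ≤ x I} = ⋂ I, {x | 0 ≤ x I} := by
        ext x; simp [Set.mem_iInter]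
      rw [this]
      exact isClosed_iInter fun I => isClosed_le continuous_const (continuous_apply I)
    have h2 : IsClosed {x : Finset V → ℝ | ∀ I, ¬ Indep G I → x I = 0} := by
      have : {x : Finset V → ℝ | ∀ I, ¬ Indep G I → x I = 0} =
          ⋂ I, ⋂ (_ : ¬ Indep G I), {x | x I = 0} := by
        ext x; simp [Set.mem_iInter]
      rw [this]
      exact isClosed_iInter fun I => isClosed_iInter fun _ =>
        isClosed_eq (continuous_apply I) continuous_const
    have h3 : IsClosed {x : Finset V → ℝ | ∑ I : Finset V, x I ≤ t} :=
      isClosed_le (by exact continuous_finset_sum _ fun I _ => continuous_apply I)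
        continuous_const
    have : Δ = {x : Finset V → ℝ | ∀ I, 0 ≤ x I} ∩
        ({x | ∀ I, ¬ Indep G I → x I = 0} ∩ {x | ∑ I : Finset V, x I ≤ t}) := by
      rfl
    rw [this]
    exact h1.inter (h2.inter h3)
  have hΔbdd : Bornology.IsBounded Δ := by
    rw [Metric.isBounded_iff_subset_closedBall 0]
    refine ⟨t, fun x hx => ?_⟩
    obtain ⟨hx0, _, hxt⟩ := hx
    rw [Metric.mem_closedBall, dist_zero_right]
    rw [pi_norm_le_iff_of_nonneg ht0]
    intro I
    rw [Real.norm_eq_abs, abs_le]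
    constructor
    · linarith [hx0 I]
    · calc x I ≤ ∑ J : Finset V, x J :=
          Finset.single_le_sum (fun J _ => hx0 J) (mem_univ I)
        _ ≤ t := hxt
  have hΔcomp : IsCompact Δ := Metric.isCompact_of_isClosed_isBounded hΔclosed hΔbdd
  set D : Set (V → ℝ) := L '' Δ with hD
  have hLcont : Continuous L := L.continuous_of_finiteDimensional
  have hDcomp : IsCompact D := hΔcomp.image hLcont
  have hDconv : Convex ℝ D := hΔconv.linear_image L
  set Q : Set (V → ℝ) := {z | ∀ v, 1 ≤ z v} with hQ
  have hQclosed : IsClosed Q := by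
    have : Q = ⋂ v, {z : V → ℝ | 1 ≤ z v} := by ext z; simp [hQ, Set.mem_iInter]
    rw [this]
    exact isClosed_iInter fun v => isClosed_le continuous_const (continuous_apply v)
  have hQconv : Convex ℝ Q := by
    rintro z hz z' hz' α β hα hβ hαβ v
    calc (1:ℝ) = α * 1 + β * 1 := by rw [mul_one, mul_one, hαβ]
      _ ≤ α * z v + β * z' v := by
          gcongr
          exacts [hz v, hz' v]
      _ = (α • z + β • z') v := by simp [smul_eq_mul]
  have hdisj : Disjoint D Q := by
    rw [Set.disjoint_left]
    rintro z ⟨x, hxΔ, rfl⟩ hzQ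
    obtain ⟨hx0, hxs, hxt⟩ := hxΔ
    have hcov : ∀ v : V, 1 ≤ ∑ I ∈ univ.filter (fun I : Finset V => v ∈ I), x I :=
      fun v => hzQ v
    have := fcn_le_of_realColoring G x hx0 hxs hcov
    linarith
  obtain ⟨f, u, s, hfD, hus, hfQ⟩ :=
    geometric_hahn_banach_compact_closed hDconv hDcomp hQconv hQclosed hdisj
  set w : V → ℝ := fun v => f (fun j => if v = j then (1:ℝ) else 0) with hw
  have hfapp : ∀ z : V → ℝ, f z = ∑ v, z v * w v := by
    intro z
    conv_lhs => rw [pi_eq_sum_univ z]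
    rw [map_sum]
    refine Finset.sum_congr rfl fun v _ => ?_
    rw [map_smul]
    simp [hw, smul_eq_mul]
  have hone : (fun _ : V => (1:ℝ)) ∈ Q := fun v => le_refl 1
  have hf1 : s < f (fun _ : V => (1:ℝ)) := hfQ _ hone
  have hf1sum : f (fun _ : V => (1:ℝ)) = ∑ v, w v := by
    rw [hfapp]; simp
  -- nonnegativity of w
  have hw0 : ∀ v, 0 ≤ w v := by
    intro v
    by_contra hneg
    push_neg at hneg
    set A : ℝ := f (fun _ : V => (1:ℝ)) - s + 1 with hA
    have hA0 : 0 < A := by rw [hA]; linarith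
    set μ : ℝ := A / (-w v) with hμ
    have hμ0 : 0 ≤ μ := le_of_lt (div_pos hA0 (by linarith))
    set z : V → ℝ := (fun _ => (1:ℝ)) + μ • (fun j => if v = j then (1:ℝ) else 0) with hz
    have hzQ : z ∈ Q := by
      intro j
      simp only [hz, Pi.add_apply, Pi.smul_apply, smul_eq_mul]
      have : 0 ≤ μ * (if v = j then (1:ℝ) else 0) := by
        split_ifs <;> simp [hμ0]
      linarith
    have hwne : w v ≠ 0 := ne_of_lt hneg
    have hμw : μ * w v = -A := by
      rw [hμ, div_neg, neg_mul, div_mul_cancel₀ _ hwne]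
    have hfz : f z = s - 1 := by
      rw [hz, map_add, map_smul, smul_eq_mul]
      have hδ : (f fun j => if v = j then (1:ℝ) else 0) = w v := rfl
      rw [hδ, hμw, hA]
      ring
    have := hfQ z hzQ
    rw [hfz] at this
    linarith
  -- positivity of u
  have hu0 : 0 < u := by
    have h0D : (0 : V → ℝ) ∈ D := by
      refine ⟨0, ⟨fun I => le_refl 0, fun I _ => rfl, by simpa using ht0⟩, ?_⟩
      simp
    have := hfD 0 h0D
    simpa using this
  -- every independent set has small weight
  have hindep : ∀ S : Finset V, Indep G S → t * ∑ v ∈ S, w v < u := by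
    intro S hS
    set xS : Finset V → ℝ := fun J => if J = S then t else 0 with hxS
    have hxΔ : xS ∈ Δ := by
      refine ⟨fun J => by simp only [hxS]; split_ifs <;> simp [ht0], fun J hJ => ?_, ?_⟩
      · simp only [hxS]
        split_ifs with hJS
        · exact absurd (hJS ▸ hS) hJ
        · rfl
      · simp only [hxS]
        simp
    have hLx : L xS = fun v => if v ∈ S then t else 0 := by
      funext v
      show ∑ J ∈ univ.filter (fun J : Finset V => v ∈ J), xS J = _
      simp only [hxS]
      rw [Finset.sum_ite_eq' (univ.filter (fun J : Finset V => v ∈ J)) S fun _ => t]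
      simp
    have hmem : L xS ∈ D := ⟨xS, hxΔ, rfl⟩
    have hflt := hfD _ hmem
    rw [hfapp] at hflt
    have : ∑ v, (L xS) v * w v = t * ∑ v ∈ S, w v := by
      rw [hLx, Finset.mul_sum]
      rw [← Finset.sum_filter_add_sum_filter_not univ (fun v => v ∈ S)]
      have h1 : ∑ v ∈ univ.filter (fun v => v ∈ S), (if v ∈ S then t else 0) * w v
          = ∑ v ∈ S, t * w v := by
        rw [Finset.filter_mem_eq_inter, univ_inter]
        exact Finset.sum_congr rfl fun v hv => by simp [hv]
      have h2 : ∑ v ∈ univ.filter (fun v => ¬ v ∈ S), (if v ∈ S then t else 0) * w v = 0 := by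
        refine Finset.sum_eq_zero fun v hv => ?_
        simp only [mem_filter] at hv
        simp [hv.2]
      rw [h1, h2, add_zero]
    rw [this] at hflt
    exact hflt
  -- the final fractional clique
  rcases eq_or_lt_of_le ht0 with rfl | htpos
  · exact ⟨0, ⟨fun v => le_refl 0, fun S _ => by simp⟩, by simp⟩
  have hfsum : u < ∑ v, w v := by rw [← hf1sum]; linarith
  refine ⟨fun v => (t / u) * w v, ⟨fun v => mul_nonneg (div_nonneg ht0 hu0.le) (hw0 v),
    fun S hS => ?_⟩, ?_⟩
  · rw [← Finset.mul_sum, div_mul_eq_mul_div, div_le_one hu0]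
    exact (hindep S hS).le
  · rw [← Finset.mul_sum]
    have h2 : t / u * u ≤ t / u * ∑ v, w v :=
      mul_le_mul_of_nonneg_left hfsum.le (div_nonneg ht0 hu0.le)
    rw [div_mul_cancel₀ t (ne_of_gt hu0)] at h2
    exact h2

/-- Product of fractional cliques is a fractional clique of the OR product. -/
lemma fracClique_prod {W : Type*} [Fintype W] (H : SimpleGraph W)
    {w1 : V → ℝ} {w2 : W → ℝ} (h1 : FracClique G w1) (h2 : FracClique H w2) :
    FracClique (G.orProd H) (fun p => w1 p.1 * w2 p.2) := by
  classical
  refine ⟨fun p => mul_nonneg (h1.1 p.1) (h2.1 p.2), fun S hS => ?_⟩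
  have hsub : S ⊆ (S.image Prod.fst) ×ˢ (S.image Prod.snd) := by
    intro p hp
    exact Finset.mem_product.2 ⟨Finset.mem_image_of_mem _ hp, Finset.mem_image_of_mem _ hp⟩
  have hle : ∑ p ∈ S, w1 p.1 * w2 p.2
      ≤ ∑ p ∈ (S.image Prod.fst) ×ˢ (S.image Prod.snd), w1 p.1 * w2 p.2 :=
    Finset.sum_le_sum_of_subset_of_nonneg hsub
      (fun p _ _ => mul_nonneg (h1.1 p.1) (h2.1 p.2))
  have hprod : ∑ p ∈ (S.image Prod.fst) ×ˢ (S.image Prod.snd), w1 p.1 * w2 p.2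
      = (∑ u ∈ S.image Prod.fst, w1 u) * (∑ v ∈ S.image Prod.snd, w2 v) := by
    rw [Finset.sum_product]
    rw [Finset.sum_mul_sum]
  have hind1 : Indep G (S.image Prod.fst) := by
    intro u hu v hv hadj
    obtain ⟨p, hp, rfl⟩ := Finset.mem_image.1 hu
    obtain ⟨q, hq, rfl⟩ := Finset.mem_image.1 hv
    exact hS p hp q hq (Or.inl hadj)
  have hind2 : Indep H (S.image Prod.snd) := by
    intro u hu v hv hadj
    obtain ⟨p, hp, rfl⟩ := Finset.mem_image.1 hu
    obtain ⟨q, hq, rfl⟩ := Finset.mem_image.1 hv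
    exact hS p hp q hq (Or.inr hadj)
  have hn2 : 0 ≤ ∑ v ∈ S.image Prod.snd, w2 v := Finset.sum_nonneg fun v _ => h2.1 v
  calc ∑ p ∈ S, w1 p.1 * w2 p.2
      ≤ (∑ u ∈ S.image Prod.fst, w1 u) * (∑ v ∈ S.image Prod.snd, w2 v) := by
        rw [← hprod]; exact hle
    _ ≤ 1 * 1 := mul_le_mul (h1.2 _ hind1) (h2.2 _ hind2) hn2 zero_le_one
    _ = 1 := by norm_num

/-- Product of fold colorings is a fold coloring of the OR product. -/
lemma foldColoring_prod {W : Type*} (H : SimpleGraph W) {a1 b1 a2 b2 : ℕ}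
    (h1 : G.IsFoldColoring a1 b1) (h2 : H.IsFoldColoring a2 b2) :
    (G.orProd H).IsFoldColoring (a1 * a2) (b1 * b2) := by
  classical
  obtain ⟨c1, hc1, hd1⟩ := h1
  obtain ⟨c2, hc2, hd2⟩ := h2
  refine ⟨fun p => (c1 p.1 ×ˢ c2 p.2).image finProdFinEquiv, fun p => ?_, ?_⟩
  · rw [Finset.card_image_of_injective _ finProdFinEquiv.injective,
      Finset.card_product, hc1, hc2]
  · intro p q hpq
    rw [Finset.disjoint_left]
    rintro i hi hj
    obtain ⟨r, hr, hre⟩ := Finset.mem_image.1 hi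
    obtain ⟨r', hr', hre'⟩ := Finset.mem_image.1 hj
    have hrr : r = r' := finProdFinEquiv.injective (hre.trans hre'.symm)
    subst hrr
    rw [Finset.mem_product] at hr hr'
    rcases hpq with h | h
    · exact Finset.disjoint_left.1 (hd1 _ _ h) hr.1 hr'.1
    · exact Finset.disjoint_left.1 (hd2 _ _ h) hr.2 hr'.2

/-- The key multiplicativity theorem. -/
theorem fcn_orProd {W : Type*} [Fintype W] (H : SimpleGraph W) :
    (G.orProd H).fracChromaticNumber = G.fracChromaticNumber * H.fracChromaticNumber := by
  classical
  have hA0 : 0 ≤ G.fracChromaticNumber := fcn_nonneg G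
  have hB0 : 0 ≤ H.fracChromaticNumber := fcn_nonneg H
  have hP0 : 0 ≤ (G.orProd H).fracChromaticNumber := fcn_nonneg _
  set A := G.fracChromaticNumber with hA
  set B := H.fracChromaticNumber with hB
  set P := (G.orProd H).fracChromaticNumber with hP
  have hUB : P ≤ A * B := by
    refine le_of_forall_pos_le_add'' fun ε hε => ?_
    have hAB1 : 0 < A + B + 1 := by linarith
    set ε' : ℝ := min 1 (ε / (A + B + 1)) with hε'
    have hε'0 : 0 < ε' := lt_min one_pos (div_pos hε hAB1)
    have hε'1 : ε' ≤ 1 := min_le_left _ _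
    have hε'ε : ε' * (A + B + 1) ≤ ε := by
      have h := min_le_right (1:ℝ) (ε / (A + B + 1))
      calc ε' * (A + B + 1) ≤ (ε / (A + B + 1)) * (A + B + 1) :=
            mul_le_mul_of_nonneg_right h hAB1.le
        _ = ε := div_mul_cancel₀ ε (ne_of_gt hAB1)
    obtain ⟨r, hrS, hr⟩ := Real.lt_sInf_add_pos (colorSet_nonempty G) hε'0
    obtain ⟨q, hqS, hq⟩ := Real.lt_sInf_add_pos (colorSet_nonempty H) hε'0
    have hr0 : 0 ≤ r := colorSet_nonneg G r hrS
    have hq0 : 0 ≤ q := colorSet_nonneg H q hqS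
    obtain ⟨a1, b1, hb1, hcol1, rfl⟩ := hrS
    obtain ⟨a2, b2, hb2, hcol2, rfl⟩ := hqS
    have hmem : ((a1:ℝ)/b1) * ((a2:ℝ)/b2) ∈ colorSet (G.orProd H) := by
      refine ⟨a1 * a2, b1 * b2, Nat.mul_pos hb1 hb2, foldColoring_prod G H hcol1 hcol2, ?_⟩
      push_cast
      rw [div_mul_div_comm]
    have hPle : P ≤ ((a1:ℝ)/b1) * ((a2:ℝ)/b2) := csInf_le (colorSet_bddBelow _) hmem
    have hmul : ((a1:ℝ)/b1) * ((a2:ℝ)/b2) ≤ (A + ε') * (B + ε') :=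
      mul_le_mul hr.le hq.le hq0 (by linarith)
    nlinarith [hε'0.le, hε'1, hε'ε, hA0, hB0]
  have hLB : A * B ≤ P := by
    by_contra hc
    push_neg at hc
    have hApos : 0 < A := by
      rcases eq_or_lt_of_le hA0 with h | h
      · rw [← h, zero_mul] at hc; linarith
      · exact h
    have hBpos : 0 < B := by
      rcases eq_or_lt_of_le hB0 with h | h
      · rw [← h, mul_zero] at hc; linarith
      · exact h
    have hPBA : P / B < A := by rw [div_lt_iff₀ hBpos]; nlinarith
    set tG : ℝ := (P / B + A) / 2 with htG
    have htG0 : 0 < tG := by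
      have : 0 ≤ P / B := div_nonneg hP0 hBpos.le
      rw [htG]; linarith
    have htGA : tG < A := by rw [htG]; linarith
    have htGP : P / B < tG := by rw [htG]; linarith
    obtain ⟨wG, hwG, hwGsum⟩ := exists_fracClique G htG0.le htGA
    have hPtG : P / tG < B := by
      rw [div_lt_iff₀ htG0]
      have := (div_lt_iff₀ hBpos).1 htGP
      nlinarith
    set tH : ℝ := (P / tG + B) / 2 with htH
    have htH0 : 0 < tH := by
      have : 0 ≤ P / tG := div_nonneg hP0 htG0.le
      rw [htH]; linarith
    have htHB : tH < B := by rw [htH]; linarith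
    have htHP : P / tG < tH := by rw [htH]; linarith
    obtain ⟨wH, hwH, hwHsum⟩ := exists_fracClique H htH0.le htHB
    have hclique := fracClique_prod G H hwG hwH
    have hle : ∑ p : V × W, wG p.1 * wH p.2 ≤ P := by
      refine le_csInf (colorSet_nonempty _) ?_
      rintro r ⟨a, b, hb, hcol, rfl⟩
      exact weak_duality _ hclique hb hcol
    have hsum : ∑ p : V × W, wG p.1 * wH p.2 = (∑ v, wG v) * (∑ w, wH w) := by
      rw [Fintype.sum_prod_type, Finset.sum_mul_sum]
    have hPW : P < tG * tH := by
      have h1 : (P / tG) * tG < tH * tG := mul_lt_mul_of_pos_right htHP htG0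
      rw [div_mul_cancel₀ P (ne_of_gt htG0)] at h1
      linarith [h1, mul_comm tH tG]
    have h2 : tG * tH ≤ (∑ v, wG v) * (∑ w, wH w) :=
      mul_le_mul hwGsum hwHsum htH0.le (le_trans htG0.le hwGsum)
    rw [hsum] at hle
    linarith
  exact le_antisymm hUB hLB

end FracChromAux

namespace FracChromAux

/-- Fractional chromatic number is invariant under graph isomorphism. -/
lemma foldColoring_map {V₁ V₂ : Type*} {G₁ : SimpleGraph V₁} {G₂ : SimpleGraph V₂}
    (f : G₁ ≃g G₂) {a b : ℕ} (h : G₁.IsFoldColoring a b) : G₂.IsFoldColoring a b := by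
  obtain ⟨c, hcard, hdisj⟩ := h
  refine ⟨fun v => c (f.symm v), fun v => hcard _, fun u v huv => ?_⟩
  exact hdisj _ _ (f.symm.map_adj_iff.2 huv)

/-- Fractional chromatic number is invariant under graph isomorphism. -/
lemma fcn_iso {V₁ V₂ : Type*} (G₁ : SimpleGraph V₁) (G₂ : SimpleGraph V₂) (e : G₁ ≃g G₂) :
    G₁.fracChromaticNumber = G₂.fracChromaticNumber := by
  have hset : {r : ℝ | ∃ a b : ℕ, 0 < b ∧ G₁.IsFoldColoring a b ∧ r = (a : ℝ) / b}
      = {r : ℝ | ∃ a b : ℕ, 0 < b ∧ G₂.IsFoldColoring a b ∧ r = (a : ℝ) / b} := by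
    ext r
    constructor
    · rintro ⟨a, b, hb, hcol, rfl⟩
      exact ⟨a, b, hb, foldColoring_map e hcol, rfl⟩
    · rintro ⟨a, b, hb, hcol, rfl⟩
      exact ⟨a, b, hb, foldColoring_map e.symm hcol, rfl⟩
  show sInf _ = sInf _
  rw [hset]

/-- The zeroth OR power has fractional chromatic number 1. -/
lemma fcn_orPow_zero {V : Type*} (G : SimpleGraph V) :
    (G.orPow 0).fracChromaticNumber = 1 := by
  classical
  have hmem : (1:ℝ) ∈ colorSet (G.orPow 0) := by
    refine ⟨1, 1, one_pos, ⟨fun _ => {0}, fun v => rfl, fun u v huv => ?_⟩, by norm_num⟩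
    obtain ⟨k, -⟩ := huv
    exact k.elim0
  have hlb : ∀ r ∈ colorSet (G.orPow 0), (1:ℝ) ≤ r := by
    rintro r ⟨a, b, hb, ⟨c, hcard, -⟩, rfl⟩
    have hba : b ≤ a := by
      calc b = (c (fun i => i.elim0)).card := (hcard _).symm
        _ ≤ (univ : Finset (Fin a)).card := Finset.card_le_card (Finset.subset_univ _)
        _ = a := by simp
    rw [le_div_iff₀ (by exact_mod_cast hb : (0:ℝ) < b), one_mul]
    exact_mod_cast hba
  exact le_antisymm (csInf_le ⟨0, fun r hr => colorSet_nonneg _ r hr⟩ hmem)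
    (le_csInf ⟨1, hmem⟩ hlb)

/-- Splitting off one coordinate of the OR power. -/
lemma fcn_orPow_succ {V : Type*} (G : SimpleGraph V) (m : ℕ) :
    (G.orPow (m+1)).fracChromaticNumber = (G.orProd (G.orPow m)).fracChromaticNumber := by
  refine fcn_iso _ _ ⟨⟨fun f => (f 0, fun k => f k.succ),
    fun p => Fin.cons p.1 p.2, fun f => ?_, fun p => ?_⟩, ?_⟩
  · funext k
    refine Fin.cases ?_ (fun i => ?_) k
    · exact Fin.cons_zero _ _
    · exact Fin.cons_succ _ _ _
  · ext <;> simp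
  · intro f g
    show (G.Adj (f 0) (g 0) ∨ ∃ k : Fin m, G.Adj (f k.succ) (g k.succ))
      ↔ ∃ k : Fin (m+1), G.Adj (f k) (g k)
    exact (Fin.exists_fin_succ (P := fun k => G.Adj (f k) (g k))).symm

end FracChromAux

/-- The fractional chromatic number is multiplicative under the OR product:
`χ_f(G × H) = χ_f(G) · χ_f(H)`; in particular `χ_f(G^m) = (χ_f(G))^m`. -/
theorem fracChromaticNumber_orProd {V W : Type*} [Fintype V] [Fintype W]
    (G : SimpleGraph V) (H : SimpleGraph W) :
    (G.orProd H).fracChromaticNumber = G.fracChromaticNumber * H.fracChromaticNumber ∧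
    ∀ m : ℕ, (G.orPow m).fracChromaticNumber = G.fracChromaticNumber ^ m := by
  refine ⟨FracChromAux.fcn_orProd G H, fun m => ?_⟩
  induction m with
  | zero => simpa using FracChromAux.fcn_orPow_zero G
  | succ n ih =>
    rw [FracChromAux.fcn_orPow_succ G n, FracChromAux.fcn_orProd G (G.orPow n), ih, pow_succ]
    ring
end

section
/- There exist five unit vectors v_1, …, v_5 in R^3 with v_i orthogonal to v_{i+1} for i = 1,…,5 (indices mod 5), and a unit vector ψ ∈ R^3, such that Σ_{i=1}^5 ⟨ψ, v_i⟩² = √5 > 2. -/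
set_option maxHeartbeats 1000000


/-- KCBS: there exist five unit vectors `v₁,…,v₅` in `ℝ³` with `v_i ⊥ v_{i+1}`
(indices mod 5) and a unit vector `ψ ∈ ℝ³` such that
`Σ_{i=1}^5 ⟨ψ, v_i⟩² = √5 > 2`. -/
theorem kcbs_realization :
    ∃ (v : Fin 5 → EuclideanSpace ℝ (Fin 3)) (ψ : EuclideanSpace ℝ (Fin 3)),
      (∀ i, ‖v i‖ = 1) ∧
      (∀ i, inner ℝ (v i) (v (i + 1)) = (0 : ℝ)) ∧
      ‖ψ‖ = 1 ∧
      (∑ i, (inner ℝ ψ (v i) : ℝ) ^ 2 = Real.sqrt 5) ∧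
      Real.sqrt 5 > 2 := by
  have hs2 : Real.sqrt 5 ^ 2 = 5 := Real.sq_sqrt (by norm_num)
  have hs_nonneg : (0:ℝ) ≤ Real.sqrt 5 := Real.sqrt_nonneg 5
  have hs_gt : Real.sqrt 5 > 2 := by nlinarith
  set s : ℝ := Real.sqrt 5 with hs
  set c : ℝ := (1 + s) / 4 with hc
  have hc_pos : 0 < c := by rw [hc]; linarith
  have hsc2 : Real.sqrt c ^ 2 = c := Real.sq_sqrt hc_pos.le
  set sc : ℝ := Real.sqrt c with hscdef
  have h10a : (0:ℝ) ≤ 10 - 2 * s := by nlinarith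
  have h10b : (0:ℝ) ≤ 10 + 2 * s := by nlinarith
  set a : ℝ := Real.sqrt (10 - 2 * s) with hadef
  set b : ℝ := Real.sqrt (10 + 2 * s) with hbdef
  have ha2 : a ^ 2 = 10 - 2 * s := Real.sq_sqrt h10a
  have hb2 : b ^ 2 = 10 + 2 * s := Real.sq_sqrt h10b
  have hab : a * b = 4 * s := by
    rw [hadef, hbdef, ← Real.sqrt_mul h10a]
    have h : (10 - 2 * s) * (10 + 2 * s) = 80 := by nlinarith
    rw [h, show (80:ℝ) = 4 ^ 2 * 5 by norm_num, Real.sqrt_mul (by positivity),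
      Real.sqrt_sq (by norm_num)]
  have h1c : (0:ℝ) < 1 + c := by linarith
  set n : ℝ := Real.sqrt (1 + c) with hndef
  have hn2 : n ^ 2 = 1 + c := Real.sq_sqrt h1c.le
  have hn_pos : 0 < n := Real.sqrt_pos.mpr h1c
  set t : ℝ := 1 / n with htdef
  have ht2 : t ^ 2 * (1 + c) = 1 := by
    rw [htdef]; field_simp; linarith [hn2]
  -- planar coordinates
  set x : Fin 5 → ℝ := ![1, -(1+s)/4, (s-1)/4, (s-1)/4, -(1+s)/4] with hx
  set y : Fin 5 → ℝ := ![0, a/4, -b/4, b/4, -a/4] with hy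
  have hunit : ∀ i, x i ^ 2 + y i ^ 2 = 1 := by
    intro i
    fin_cases i <;> simp [hx, hy] <;> nlinarith
  have hdot : ∀ i : Fin 5, x i * x (i+1) + y i * y (i+1) + c = 0 := by
    intro i
    fin_cases i <;> simp [hx, hy, hc, Fin.isValue] <;> nlinarith
  refine ⟨fun i => (WithLp.toLp 2 ![t * x i, t * y i, t * sc] : EuclideanSpace ℝ (Fin 3)),
    (WithLp.toLp 2 ![0, 0, 1] : EuclideanSpace ℝ (Fin 3)), ?_, ?_, ?_, ?_, hs_gt⟩
  · intro i
    rw [EuclideanSpace.norm_eq]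
    rw [show (1:ℝ) = Real.sqrt 1 from Real.sqrt_one.symm]
    congr 1
    simp only [PiLp.toLp_apply, Fin.sum_univ_three, Matrix.cons_val_zero, Matrix.cons_val_one, Matrix.head_cons,
      Matrix.cons_val_two, Matrix.tail_cons, Real.norm_eq_abs, sq_abs]
    have := hunit i
    nlinarith [ht2, hsc2, this]
  · intro i
    simp only [PiLp.inner_apply, PiLp.toLp_apply, RCLike.inner_apply, starRingEnd_apply, star_trivial,
      Fin.sum_univ_three, Matrix.cons_val_zero, Matrix.cons_val_one, Matrix.head_cons,
      Matrix.cons_val_two, Matrix.tail_cons]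
    have := hdot i
    nlinarith [hsc2, this]
  · rw [EuclideanSpace.norm_eq]
    simp [Fin.sum_univ_three]
  · have h5 : 5 * c = s * (1 + c) := by rw [hc]; nlinarith
    have hfin : 5 * (t ^ 2 * sc ^ 2) = s := by
      rw [hsc2]; linear_combination s * ht2 + t ^ 2 * h5
    simp only [PiLp.inner_apply, PiLp.toLp_apply, RCLike.inner_apply, conj_trivial, Fin.sum_univ_three,
      Fin.sum_univ_five, Matrix.cons_val_zero, Matrix.cons_val_one, Matrix.head_cons,
      Matrix.cons_val_two, Matrix.tail_cons]
    linear_combination hfin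
end
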